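/- arXiv:2509.02271 — 2 statements merged into one kernel-verified Lean document; each statement's English description precedes it below -/
import Mathlib

section
/- Let n ≥ 1 and let O : Fin n → ℝ² be an observation with S(O) = Σ_j O j ≠ 0 and ū(O) = S(O)/‖S(O)‖. Define the preprocessing transformation T_pre(O) : Fin n → ℝ² by T_pre(O) j = Rot(ū(O))ᵀ ⬝ (O j). Then T_pre is invariant under rotations of the observation: for every planar rotation matrix R(θ), T_pre(j ↦ R(θ) ⬝ O j) = T_pre(O). -/
open Matrix

/-- The planar rotation matrix `R(θ)`. -/
noncomputable def Rmat (θ : ℝ) : Matrix (Fin 2) (Fin 2) ℝ :=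
  !![Real.cos θ, -Real.sin θ; Real.sin θ, Real.cos θ]

/-- For a unit vector `u = (u₁, u₂) ∈ ℝ²`, the rotation matrix
`Rot(u) = ![![u₁, −u₂], ![u₂, u₁]]` sending `e₁ = (1,0)` to `u`. -/
def Rot (u : Fin 2 → ℝ) : Matrix (Fin 2) (Fin 2) ℝ :=
  !![u 0, -(u 1); u 1, u 0]

/-- A `2 × 2` matrix acting on a vector of the Euclidean plane
by matrix–vector multiplication. -/
noncomputable def mvE (M : Matrix (Fin 2) (Fin 2) ℝ) (v : EuclideanSpace ℝ (Fin 2)) :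
    EuclideanSpace ℝ (Fin 2) :=
  WithLp.toLp 2 (M.mulVec v)

/-- The sum `S(O) = Σ_j O j` of an observation. -/
noncomputable def obsSum {n : ℕ} (O : Fin n → EuclideanSpace ℝ (Fin 2)) :
    EuclideanSpace ℝ (Fin 2) :=
  ∑ j, O j

/-- The normalized sum `ū(O) = S(O)/‖S(O)‖` of an observation. -/
noncomputable def ubar {n : ℕ} (O : Fin n → EuclideanSpace ℝ (Fin 2)) :
    EuclideanSpace ℝ (Fin 2) :=
  ‖obsSum O‖⁻¹ • obsSum O

/-- The preprocessing transformation `T_pre(O) j = Rot(ū(O))ᵀ ⬝ (O j)`. -/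
noncomputable def Tpre {n : ℕ} (O : Fin n → EuclideanSpace ℝ (Fin 2)) :
    Fin n → EuclideanSpace ℝ (Fin 2) :=
  fun j => mvE (Rot (ubar O))ᵀ (O j)

lemma norm_Rmat_mulVec (θ : ℝ) (v : EuclideanSpace ℝ (Fin 2)) :
    ‖(mvE (Rmat θ) v : EuclideanSpace ℝ (Fin 2))‖ = ‖v‖ := by
  have h := Real.sin_sq_add_cos_sq θ
  rw [EuclideanSpace.norm_eq, EuclideanSpace.norm_eq]
  congr 1
  simp only [Fin.sum_univ_two, mvE, Rmat, mulVec, dotProduct, Fin.sum_univ_two]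
  simp [Matrix.cons_val_zero, Matrix.cons_val_one]
  ring_nf
  nlinarith [h]

lemma obsSum_rot {n : ℕ} (O : Fin n → EuclideanSpace ℝ (Fin 2)) (θ : ℝ) :
    obsSum (fun j => mvE (Rmat θ) (O j)) = mvE (Rmat θ) (obsSum O) := by
  unfold obsSum mvE
  rw [WithLp.ofLp_sum, Matrix.mulVec_sum, WithLp.toLp_sum]

/-- For an observation with nonzero sum, the preprocessing transformation `T_pre`
is invariant under rotations of the observation: for every planar rotation matrix
`R(θ)`, `T_pre(j ↦ R(θ) ⬝ O j) = T_pre(O)`. -/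
theorem stmt4 (n : ℕ) (hn : 1 ≤ n) (O : Fin n → EuclideanSpace ℝ (Fin 2))
    (hS : obsSum O ≠ 0) (θ : ℝ) :
    Tpre (fun j => mvE (Rmat θ) (O j)) = Tpre O := by
  have hnorm : ‖obsSum (fun j => mvE (Rmat θ) (O j))‖ = ‖obsSum O‖ := by
    rw [obsSum_rot]; exact norm_Rmat_mulVec θ _
  have hub : ubar (fun j => mvE (Rmat θ) (O j)) = mvE (Rmat θ) (ubar O) := by
    unfold ubar
    rw [hnorm, obsSum_rot]
    show _ = WithLp.toLp 2 ((Rmat θ).mulVec (‖obsSum O‖⁻¹ • obsSum O).ofLp)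
    rw [WithLp.ofLp_smul, Matrix.mulVec_smul]
    rfl
  have hRot : Rot (mvE (Rmat θ) (ubar O)) = Rmat θ * Rot (ubar O) := by
    ext i j
    fin_cases i <;> fin_cases j <;>
      simp [Rot, Rmat, mvE, Matrix.mul_apply, Matrix.mulVec, dotProduct,
        Fin.sum_univ_two] <;> ring
  funext j
  show mvE (Rot (ubar fun j => mvE (Rmat θ) (O j)))ᵀ _ = _
  rw [hub, hRot]
  unfold mvE Tpre mvE
  rw [WithLp.ofLp_toLp, Matrix.transpose_mul, Matrix.mulVec_mulVec, Matrix.mul_assoc]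
  have horth : (Rmat θ)ᵀ * Rmat θ = 1 := by
    have h := Real.sin_sq_add_cos_sq θ
    ext i k
    fin_cases i <;> fin_cases k <;>
      simp [Rmat, Matrix.mul_apply, Fin.sum_univ_two, Matrix.one_apply, Matrix.transpose, Matrix.vecHead, Matrix.vecTail, Matrix.of_apply] <;> nlinarith [h]
  rw [horth, Matrix.mul_one]
end

section
/- (Rotational equivariance of the pre/post-processed policy.) Let n ≥ 1 and let m : (Fin n → ℝ²) → ℝ² be an arbitrary function. For an observation O : Fin n → ℝ² with S(O) = Σ_j O j ≠ 0, define T_pre(O) j = Rot(ū(O))ᵀ ⬝ (O j) and F(O) = Rot(ū(O)) ⬝ m(T_pre(O)), where ū(O) = S(O)/‖S(O)‖. Then F is equivariant under planar rotations: for every rotation matrix R(θ), F(j ↦ R(θ) ⬝ O j) = R(θ) ⬝ F(O). -/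
open Matrix

/-- The pre/post-processed policy `F(O) = Rot(ū(O)) ⬝ m(T_pre(O))` built from an
arbitrary function `m`. -/
noncomputable def F {n : ℕ} (m : (Fin n → EuclideanSpace ℝ (Fin 2)) → EuclideanSpace ℝ (Fin 2))
    (O : Fin n → EuclideanSpace ℝ (Fin 2)) : EuclideanSpace ℝ (Fin 2) :=
  mvE (Rot (ubar O)) (m (Tpre O))

lemma Rmat_transpose (θ : ℝ) :
    (Rmat θ)ᵀ = !![Real.cos θ, Real.sin θ; -Real.sin θ, Real.cos θ] := by
  ext i j
  fin_cases i <;> fin_cases j <;> simp [Rmat]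

lemma RtR (θ : ℝ) : (Rmat θ)ᵀ * Rmat θ = 1 := by
  rw [Rmat_transpose, Rmat, Matrix.mul_fin_two, Matrix.one_fin_two]
  ext i j
  fin_cases i <;> fin_cases j <;> simp <;> nlinarith [Real.sin_sq_add_cos_sq θ]

lemma Rot_rot (θ : ℝ) (u : EuclideanSpace ℝ (Fin 2)) :
    Rot (mvE (Rmat θ) u) = Rmat θ * Rot u := by
  ext i j
  fin_cases i <;> fin_cases j <;>
    simp [Rot, Rmat, mvE, Matrix.mulVec, Matrix.mul_apply, dotProduct,
      Fin.sum_univ_two] <;> ring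

lemma norm_mvE (θ : ℝ) (v : EuclideanSpace ℝ (Fin 2)) : ‖mvE (Rmat θ) v‖ = ‖v‖ := by
  rw [EuclideanSpace.norm_eq, EuclideanSpace.norm_eq]
  congr 1
  simp [mvE, Rmat, Matrix.mulVec, dotProduct, Fin.sum_univ_two, sq_abs]
  nlinarith [Real.sin_sq_add_cos_sq θ]

lemma obsSum_mvE {n : ℕ} (M : Matrix (Fin 2) (Fin 2) ℝ) (O : Fin n → EuclideanSpace ℝ (Fin 2)) :
    obsSum (fun j => mvE M (O j)) = mvE M (obsSum O) := by
  unfold obsSum mvE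
  rw [WithLp.ofLp_sum, Matrix.mulVec_sum, WithLp.toLp_sum]

lemma mvE_smul (M : Matrix (Fin 2) (Fin 2) ℝ) (a : ℝ) (v : EuclideanSpace ℝ (Fin 2)) :
    mvE M (a • v) = a • mvE M v := by
  unfold mvE
  rw [WithLp.ofLp_smul, Matrix.mulVec_smul, WithLp.toLp_smul]

lemma ubar_rot (θ : ℝ) {n : ℕ} (O : Fin n → EuclideanSpace ℝ (Fin 2)) :
    ubar (fun j => mvE (Rmat θ) (O j)) = mvE (Rmat θ) (ubar O) := by
  unfold ubar
  rw [obsSum_mvE, norm_mvE, mvE_smul]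

lemma mvE_mvE (M N : Matrix (Fin 2) (Fin 2) ℝ) (v : EuclideanSpace ℝ (Fin 2)) :
    mvE M (mvE N v) = mvE (M * N) v := by
  unfold mvE
  rw [WithLp.ofLp_toLp, Matrix.mulVec_mulVec]

lemma Tpre_rot (θ : ℝ) {n : ℕ} (O : Fin n → EuclideanSpace ℝ (Fin 2)) :
    Tpre (fun j => mvE (Rmat θ) (O j)) = Tpre O := by
  funext j
  unfold Tpre
  rw [ubar_rot, Rot_rot, Matrix.transpose_mul, mvE_mvE]
  congr 1
  rw [Matrix.mul_assoc, RtR, Matrix.mul_one]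

/-- Rotational equivariance of the pre/post-processed policy: for any function `m`
and any observation `O` with nonzero sum,
`F(j ↦ R(θ) ⬝ O j) = R(θ) ⬝ F(O)` for every planar rotation matrix `R(θ)`. -/
theorem stmt6 (n : ℕ) (hn : 1 ≤ n)
    (m : (Fin n → EuclideanSpace ℝ (Fin 2)) → EuclideanSpace ℝ (Fin 2))
    (O : Fin n → EuclideanSpace ℝ (Fin 2)) (hS : obsSum O ≠ 0) (θ : ℝ) :
    F m (fun j => mvE (Rmat θ) (O j)) = mvE (Rmat θ) (F m O) := by
  unfold F
  rw [Tpre_rot, ubar_rot, Rot_rot, ← mvE_mvE]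
end
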